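/- For all n ≥ 0, the Motzkin number satisfies M_{n} = \sum_{k=0}^{\lfloor n/2 \rfloor} binom(n, 2k) * C_k, where C_k is the k-th Catalan number. -/

import Mathlib

open Finset

/-- hockey stick -/
lemma hockey (p : ℕ) : ∀ n, ∑ a ∈ range n, a.choose p = n.choose (p+1) := by
  intro n
  induction n with
  | zero => simp
  | succ n ih => rw [sum_range_succ, ih, Nat.choose_succ_succ' ]; ring

lemma vandermonde_conv (p : ℕ) :
    ∀ n q, ∑ a ∈ range n, a.choose p * (n - 1 - a).choose q = n.choose (p + q + 1) := by
  intro n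
  induction n with
  | zero => simp
  | succ n ih =>
    intro q
    cases q with
    | zero =>
      simp only [Nat.choose_zero_right, mul_one, Nat.add_zero]
      exact hockey p (n+1)
    | succ q =>
      rw [sum_range_succ]
      have : ∀ a ∈ range n, a.choose p * (n + 1 - 1 - a).choose (q+1)
          = a.choose p * (n - 1 - a).choose (q+1) + a.choose p * (n - 1 - a).choose q := by
        intro a ha
        rw [mem_range] at ha
        have h1 : n + 1 - 1 - a = (n - 1 - a) + 1 := by omega
        rw [h1, Nat.choose_succ_succ, Nat.mul_add]; ring
      rw [sum_congr rfl this, sum_add_distrib, ih (q+1), ih q]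
      have h0 : n + 1 - 1 - n = 0 := by omega
      rw [h0, Nat.choose_eq_zero_of_lt (Nat.succ_pos q), mul_zero, add_zero]
      have : p + (q + 1) + 1 = (p + q + 1) + 1 := by ring
      rw [this, Nat.choose_succ_succ' ]
      ring

/-- extended sum -/
def Tf (n : ℕ) : ℕ := ∑ k ∈ range (n+1), n.choose (2*k) * catalan k

lemma Tf_eq_big (n m : ℕ) (h : n + 1 ≤ m) :
    Tf n = ∑ k ∈ range m, n.choose (2*k) * catalan k := by
  apply sum_subset
  · exact range_subset_range.2 h
  · intro k _ hk
    rw [mem_range, not_lt] at hk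
    have : n < 2 * k := by omega
    rw [Nat.choose_eq_zero_of_lt this, zero_mul]

lemma Tf_eq_half (n : ℕ) :
    Tf n = ∑ k ∈ range (n/2 + 1), n.choose (2*k) * catalan k := by
  symm
  apply sum_subset
  · exact range_subset_range.2 (by omega)
  · intro k _ hk
    rw [mem_range, not_lt] at hk
    have : n < 2 * k := by omega
    rw [Nat.choose_eq_zero_of_lt this, zero_mul]

lemma square_eq_triangle (n : ℕ) :
    ∑ i ∈ range (n+1), ∑ j ∈ range (n+1),
        catalan i * catalan j * n.choose (2*(i+j)+1)
      = ∑ k ∈ range (n+1), n.choose (2*k+1) * catalan (k+1) := by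
  rw [← sum_product']
  have hsub : ((range (n+1)).biUnion (fun k => Finset.HasAntidiagonal.antidiagonal k)) ⊆
      (range (n+1)) ×ˢ (range (n+1)) := by
    intro p hp
    simp only [mem_biUnion, Finset.HasAntidiagonal.mem_antidiagonal, mem_range] at hp
    obtain ⟨k, hk, hpk⟩ := hp
    simp only [mem_product, mem_range]
    omega
  rw [← sum_subset hsub]
  · rw [sum_biUnion]
    · apply sum_congr rfl
      intro k _
      rw [catalan_succ', mul_comm, sum_mul]
      apply sum_congr rfl
      intro p hp
      rw [Finset.HasAntidiagonal.mem_antidiagonal] at hp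
      rw [hp]
    · intro a _ b _ hab
      simp only [Function.onFun]
      apply Finset.disjoint_left.2
      intro p hpa hpb
      rw [Finset.HasAntidiagonal.mem_antidiagonal] at hpa hpb
      exact hab (hpa ▸ hpb ▸ rfl)
  · intro p hp hnp
    simp only [mem_biUnion, Finset.HasAntidiagonal.mem_antidiagonal, mem_range] at hnp
    push_neg at hnp
    have : n < p.1 + p.2 := by
      by_contra h
      exact absurd rfl (hnp (p.1+p.2) (by omega))
    have : n < 2*(p.1+p.2)+1 := by omega
    rw [Nat.choose_eq_zero_of_lt this, mul_zero]

lemma Tf_rec (n : ℕ) : Tf (n+1) = Tf n + ∑ a ∈ range n, Tf a * Tf (n-1-a) := by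
  -- LHS expansion
  have lhs : Tf (n+1) = 1 + (∑ k ∈ range (n+1), n.choose (2*k+2) * catalan (k+1))
      + ∑ k ∈ range (n+1), n.choose (2*k+1) * catalan (k+1) := by
    show ∑ k ∈ range (n+2), (n+1).choose (2*k) * catalan k = _
    rw [Finset.sum_range_succ' _ (n+1)]
    simp only [mul_zero, Nat.choose_zero_right, catalan_zero, mul_one]
    have : ∀ k ∈ range (n+1), (n+1).choose (2*(k+1)) * catalan (k+1)
        = n.choose (2*k+2) * catalan (k+1) + n.choose (2*k+1) * catalan (k+1) := by
      intro k _
      have h2 : 2*(k+1) = (2*k+1) + 1 := by ring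
      rw [h2, Nat.choose_succ_succ]
      simp only [Nat.succ_eq_add_one]
      ring
    rw [sum_congr rfl this, sum_add_distrib]
    ring
  have tn : Tf n = 1 + ∑ k ∈ range (n+1), n.choose (2*k+2) * catalan (k+1) := by
    have : Tf n = ∑ k ∈ range (n+2), n.choose (2*k) * catalan k := Tf_eq_big n (n+2) (by omega)
    rw [this, Finset.sum_range_succ' _ (n+1)]
    simp only [mul_zero, Nat.choose_zero_right, catalan_zero, mul_one]
    have : ∀ k, 2*(k+1) = 2*k+2 := by intro k; ring
    simp only [this]
    ring
  have rhs : ∑ a ∈ range n, Tf a * Tf (n-1-a)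
      = ∑ k ∈ range (n+1), n.choose (2*k+1) * catalan (k+1) := by
    have expand : ∀ a ∈ range n, Tf a * Tf (n-1-a)
        = ∑ i ∈ range (n+1), ∑ j ∈ range (n+1),
            (a.choose (2*i) * catalan i) * ((n-1-a).choose (2*j) * catalan j) := by
      intro a ha
      rw [mem_range] at ha
      rw [Tf_eq_big a (n+1) (by omega), Tf_eq_big (n-1-a) (n+1) (by omega), sum_mul_sum]
    rw [sum_congr rfl expand, sum_comm]
    have swap2 : ∀ i ∈ range (n+1),
        ∑ a ∈ range n, ∑ j ∈ range (n+1),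
            (a.choose (2*i) * catalan i) * ((n-1-a).choose (2*j) * catalan j)
        = ∑ j ∈ range (n+1), catalan i * catalan j * n.choose (2*(i+j)+1) := by
      intro i _
      rw [sum_comm]
      apply sum_congr rfl
      intro j _
      have : ∀ a ∈ range n, (a.choose (2*i) * catalan i) * ((n-1-a).choose (2*j) * catalan j)
          = (catalan i * catalan j) * (a.choose (2*i) * (n-1-a).choose (2*j)) := by
        intro a _; ring
      rw [sum_congr rfl this, ← mul_sum, vandermonde_conv (2*i) n (2*j)]
      have : 2*i + 2*j + 1 = 2*(i+j)+1 := by ring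
      rw [this]
    rw [sum_congr rfl swap2, square_eq_triangle]
  rw [lhs, tn, rhs]

theorem motzkin_eq_sum_choose_catalan (M : ℕ → ℕ) (h0 : M 0 = 1)
    (hrec : ∀ n, M (n + 1) = M n + ∑ k ∈ Finset.range n, M k * M (n - 1 - k)) :
    ∀ n, M n = ∑ k ∈ Finset.range (n / 2 + 1), n.choose (2 * k) * catalan k := by
  have key : ∀ n, M n = Tf n := by
    intro n
    induction n using Nat.strong_induction_on with
    | _ n ih =>
      match n with
      | 0 => simp [h0, Tf]
      | n+1 =>
        rw [hrec n, Tf_rec n, ih n (by omega)]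
        congr 1
        apply sum_congr rfl
        intro k hk
        rw [mem_range] at hk
        rw [ih k (by omega), ih (n-1-k) (by omega)]
  intro n
  rw [key n, Tf_eq_half]
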